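/- arXiv:0707.1966 — 3 statements merged into one kernel-verified Lean document; each statement's English description precedes it below -/
import Mathlib

section
/- Let w : E → ℝ be bounded and suppose y₀ ∈ E and ξ₀ ∈ K satisfy w(y₀) = N[w](y₀) = w(y₀+ξ₀) + l(ξ₀). Then for every ξ₁ ∈ K: w(y₀+ξ₀+ξ₁) + l(ξ₁) − w(y₀+ξ₀) ≥ l(ξ₀) + l(ξ₁) − l(ξ₀+ξ₁). Consequently, N[w](y₀+ξ₀) − w(y₀+ξ₀) ≥ inf_{ξ₁∈K} [ l(ξ₀) + l(ξ₁) − l(ξ₀+ξ₁) ]. -/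
noncomputable section

/-- The impulse obstacle operator `N[w](y) = inf_{ξ ∈ K} [w(y+ξ) + l(ξ)]`. -/
def impulseObstacle {E : Type*} [NormedAddCommGroup E] (K : Set E) (l : E → ℝ)
    (w : E → ℝ) (y : E) : ℝ :=
  ⨅ ξ : K, (w (y + ξ.1) + l ξ.1)

/-- **Subadditivity gap estimate at an impulse minimizer.**
If `w(y₀) = N[w](y₀) = w(y₀+ξ₀) + l(ξ₀)`, then for every `ξ₁ ∈ K`
`w(y₀+ξ₀+ξ₁) + l(ξ₁) - w(y₀+ξ₀) ≥ l(ξ₀) + l(ξ₁) - l(ξ₀+ξ₁)`; consequently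
`N[w](y₀+ξ₀) - w(y₀+ξ₀) ≥ inf_{ξ₁ ∈ K} [l(ξ₀) + l(ξ₁) - l(ξ₀+ξ₁)]`
(the infimum taken in the extended reals). -/
theorem impulse_obstacle_gap
    {E : Type*} [NormedAddCommGroup E] [InnerProductSpace ℝ E] [CompleteSpace E]
    [TopologicalSpace.SeparableSpace E]
    (K : Set E) (hK : K.Nonempty) (hKcl : IsClosed K) (hKconv : Convex ℝ K)
    (hKadd : ∀ a ∈ K, ∀ b ∈ K, a + b ∈ K)
    (l : E → ℝ) (hl0 : ∀ ξ ∈ K, 0 ≤ l ξ)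
    (w : E → ℝ) (hwB : ∃ M : ℝ, ∀ x, |w x| ≤ M)
    (y₀ ξ₀ : E) (hξ₀ : ξ₀ ∈ K)
    (h₁ : w y₀ = impulseObstacle K l w y₀)
    (h₂ : impulseObstacle K l w y₀ = w (y₀ + ξ₀) + l ξ₀) :
    (∀ ξ₁ ∈ K,
      l ξ₀ + l ξ₁ - l (ξ₀ + ξ₁) ≤ w (y₀ + ξ₀ + ξ₁) + l ξ₁ - w (y₀ + ξ₀)) ∧
    (⨅ ξ₁ : K, ((l ξ₀ + l ξ₁.1 - l (ξ₀ + ξ₁.1) : ℝ) : EReal)) ≤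
      ((impulseObstacle K l w (y₀ + ξ₀) - w (y₀ + ξ₀) : ℝ) : EReal) := by

  obtain ⟨M, hM⟩ := hwB
  have key : ∀ ξ₁ ∈ K,
      l ξ₀ + l ξ₁ - l (ξ₀ + ξ₁) ≤ w (y₀ + ξ₀ + ξ₁) + l ξ₁ - w (y₀ + ξ₀) := by
    intro ξ₁ hξ₁
    have hmem : ξ₀ + ξ₁ ∈ K := hKadd ξ₀ hξ₀ ξ₁ hξ₁
    have hbdd : BddBelow (Set.range fun ξ : K => w (y₀ + ξ.1) + l ξ.1) := by
      refine ⟨-M, ?_⟩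
      rintro x ⟨ξ, rfl⟩
      have h1 := hM (y₀ + ξ.1)
      have h2 := hl0 ξ.1 ξ.2
      have := abs_le.1 h1
      show -M ≤ w (y₀ + ξ.1) + l ξ.1
      linarith [this.1]
    have hle : impulseObstacle K l w y₀ ≤ w (y₀ + (ξ₀ + ξ₁)) + l (ξ₀ + ξ₁) :=
      ciInf_le hbdd (⟨ξ₀ + ξ₁, hmem⟩ : K)
    rw [h₂] at hle
    rw [show y₀ + (ξ₀ + ξ₁) = y₀ + ξ₀ + ξ₁ from (add_assoc _ _ _).symm] at hle
    linarith
  refine ⟨key, ?_⟩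
  by_contra hcon
  push_neg at hcon
  obtain ⟨z, hz1, hz2⟩ := EReal.exists_between_coe_real hcon
  have hz3 : ∀ ξ₁ : K, z ≤ l ξ₀ + l ξ₁.1 - l (ξ₀ + ξ₁.1) := by
    intro ξ₁
    have := hz2.trans_le (iInf_le _ ξ₁)
    exact_mod_cast this.le
  have hzle : (z : ℝ) ≤ impulseObstacle K l w (y₀ + ξ₀) - w (y₀ + ξ₀) := by
    haveI : Nonempty K := hK.to_subtype
    have : z + w (y₀ + ξ₀) ≤ impulseObstacle K l w (y₀ + ξ₀) := by
      refine le_ciInf (fun ξ₁ => ?_)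
      have h1 := hz3 ξ₁
      have h2 := key ξ₁.1 ξ₁.2
      linarith
    linarith
  have : ((impulseObstacle K l w (y₀ + ξ₀) - w (y₀ + ξ₀) : ℝ) : EReal) < (z : ℝ) := hz1
  exact absurd (EReal.coe_le_coe_iff.2 hzle) (not_le.2 this)
end
end

section
/- (Switching chain lemma, minimizer's obstacle; this is the content of Step 2 in the uniqueness proof.) Let D be a finite set with at least two elements, c : D×D → ℝ with c(d,d̄) ≥ c₀ for some c₀ > 0 whenever d ≠ d̄, and let v, w : D → ℝ be functions such that v(d) ≤ v(d̄) + c(d,d̄) for all d ≠ d̄. Then for every d₀ ∈ D there exists d* ∈ D such that v(d₀) − w(d₀) ≤ v(d*) − w(d*) and w(d*) < min_{d̄≠d*} [ w(d̄) + c(d*,d̄) ]. -/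
/-- **Switching chain lemma (minimizer's obstacle).**
`D` is a finite set with at least two elements, `c` a switching cost uniformly
bounded below by `c₀ > 0` off the diagonal, and `v` satisfies the suboptimality
inequalities `v d ≤ v d̄ + c d d̄`.  Then from any starting position `d₀` one can
find `d⋆` with `v d₀ - w d₀ ≤ v d⋆ - w d⋆` at which `w` lies strictly below its
switching obstacle `min_{d̄ ≠ d⋆} (w d̄ + c d⋆ d̄)`. -/
theorem switching_chain_min
    {D : Type*} [Fintype D] [Nontrivial D]
    (c : D → D → ℝ) (c₀ : ℝ) (hc₀ : 0 < c₀)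
    (hc : ∀ d d' : D, d ≠ d' → c₀ ≤ c d d')
    (v w : D → ℝ)
    (hv : ∀ d d' : D, d ≠ d' → v d ≤ v d' + c d d') :
    ∀ d₀ : D, ∃ dstar : D,
      v d₀ - w d₀ ≤ v dstar - w dstar ∧
      w dstar < ⨅ d : {d : D // d ≠ dstar}, (w d.1 + c dstar d.1) := by
  intro d₀
  -- Among all positions with `v d₀ - w d₀ ≤ v d - w d`, pick one minimizing `w`.
  set S : Finset D := Finset.univ.filter (fun d => v d₀ - w d₀ ≤ v d - w d) with hS
  have hd₀S : d₀ ∈ S := by simp [hS]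
  obtain ⟨dstar, hdS, hmin⟩ := S.exists_min_image w ⟨d₀, hd₀S⟩
  have hdS' : v d₀ - w d₀ ≤ v dstar - w dstar := by
    simpa [hS] using hdS
  refine ⟨dstar, hdS', ?_⟩
  -- key pointwise claim
  have key : ∀ j : {d : D // d ≠ dstar}, w dstar < w j.1 + c dstar j.1 := by
    rintro ⟨j, hj⟩
    by_contra hle
    push_neg at hle
    have hne : dstar ≠ j := fun h => hj h.symm
    have hle' : w j + c dstar j ≤ w dstar := hle
    have hwj : w j < w dstar := by linarith [hc dstar j hne]
    have hjS : j ∈ S := by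
      have := hv dstar j hne
      simp only [hS, Finset.mem_filter, Finset.mem_univ, true_and]
      linarith
    exact absurd (hmin j hjS) (not_le_of_gt hwj)
  -- the index type is finite and nonempty, so the infimum is attained
  obtain ⟨j, hjne⟩ := exists_ne dstar
  haveI : Nonempty {d : D // d ≠ dstar} := ⟨⟨j, hjne⟩⟩
  obtain ⟨i, hi⟩ := Finite.exists_min (fun d : {d : D // d ≠ dstar} => w d.1 + c dstar d.1)
  calc w dstar < w i.1 + c dstar i.1 := key i
    _ ≤ _ := le_ciInf hi
end

section
/- (Switching chain lemma, maximizer's obstacle; this is the content of Step 3 in the uniqueness proof.) Let D be a finite set with at least two elements, c : D×D → ℝ with c(d,d̄) ≥ c₀ for some c₀ > 0 whenever d ≠ d̄, and let v, w : D → ℝ be functions such that w(d) ≥ w(d̄) − c(d,d̄) for all d ≠ d̄. Then for every d₀ ∈ D there exists d* ∈ D such that v(d₀) − w(d₀) ≤ v(d*) − w(d*) and v(d*) > max_{d̄≠d*} [ v(d̄) − c(d*,d̄) ]. -/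
/-- **Switching chain lemma (maximizer's obstacle).**
`D` is a finite set with at least two elements, `c` a switching cost uniformly
bounded below by `c₀ > 0` off the diagonal, and `w` satisfies the superoptimality
inequalities `w d ≥ w d̄ - c d d̄`.  Then from any starting position `d₀` one can
find `d⋆` with `v d₀ - w d₀ ≤ v d⋆ - w d⋆` at which `v` lies strictly above its
reward-type switching obstacle `max_{d̄ ≠ d⋆} (v d̄ - c d⋆ d̄)`. -/
theorem switching_chain_max
    {D : Type*} [Fintype D] [Nontrivial D]
    (c : D → D → ℝ) (c₀ : ℝ) (hc₀ : 0 < c₀)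
    (hc : ∀ d d' : D, d ≠ d' → c₀ ≤ c d d')
    (v w : D → ℝ)
    (hw : ∀ d d' : D, d ≠ d' → w d' - c d d' ≤ w d) :
    ∀ d₀ : D, ∃ dstar : D,
      v d₀ - w d₀ ≤ v dstar - w dstar ∧
      (⨆ d : {d : D // d ≠ dstar}, (v d.1 - c dstar d.1)) < v dstar := by
  intro d₀
  -- the set of maximizers of v - w
  classical
  set A : Finset D := Finset.univ.filter
      (fun d => ∀ d' : D, v d' - w d' ≤ v d - w d) with hA
  have hAne : A.Nonempty := by
    obtain ⟨m, -, hm⟩ := Finset.exists_max_image Finset.univ (fun d => v d - w d)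
      ⟨d₀, Finset.mem_univ d₀⟩
    refine ⟨m, ?_⟩
    simp only [hA, Finset.mem_filter, Finset.mem_univ, true_and]
    exact fun d' => hm d' (Finset.mem_univ d')
  -- pick dstar in A maximizing v
  obtain ⟨dstar, hdA, hmax⟩ := Finset.exists_max_image A v hAne
  have hdA' : ∀ d' : D, v d' - w d' ≤ v dstar - w dstar := by
    have := (Finset.mem_filter.mp hdA).2
    exact this
  refine ⟨dstar, hdA' d₀, ?_⟩
  -- key pointwise strict bound
  have key : ∀ d : {d : D // d ≠ dstar}, v d.1 - c dstar d.1 < v dstar := by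
    rintro ⟨d, hd⟩
    by_cases hdmem : d ∈ A
    · -- v d - w d = max, so v d ≤ v dstar; use c₀
      have h1 : v d ≤ v dstar := hmax d hdmem
      have h2 : c₀ ≤ c dstar d := hc dstar d (Ne.symm hd)
      have : v d - c dstar d ≤ v dstar - c₀ := by linarith
      linarith
    · -- v d - w d < max
      have hlt : v d - w d < v dstar - w dstar := by
        rcases lt_or_eq_of_le (hdA' d) with h | h
        · exact h
        · exfalso
          apply hdmem
          simp only [hA, Finset.mem_filter, Finset.mem_univ, true_and]
          intro d'
          rw [h]; exact hdA' d'
      have h3 : w d - c dstar d ≤ w dstar := hw dstar d (Ne.symm hd)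
      linarith
  -- pass to the supremum over a finite nonempty type
  have hne : Nonempty {d : D // d ≠ dstar} := by
    obtain ⟨x, hx⟩ := exists_ne dstar
    exact ⟨⟨x, hx⟩⟩
  obtain ⟨i, hi⟩ := exists_eq_ciSup_of_finite
    (f := fun d : {d : D // d ≠ dstar} => v d.1 - c dstar d.1)
  rw [← hi]
  exact key i
end
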